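/- Let A_x be a k×k pattern over a field that is upper-triangulable with unit diagonal after row and column permutations σ, τ (i.e., A_x(σ(i),τ(j)) has some 1 on the diagonal and some 0 strictly below it). For each j ∈ Fin k, let B_j be a pattern on n_j × m_j matrices. Define the block pattern E on (Σ n_{σ⁻¹(i)}) × (Σ m_j) matrices whose (i,j)-th block is: the pattern B_j if A_x(i,j) = some 1; the all-(some 0) pattern if A_x(i,j) = some 0; and the all-unknown pattern if A_x(i,j) = none. Then minrank(E) = Σ_{j=1}^{k} minrank(B_j). -/

import Mathlib

/-- A pattern: a partially specified matrix, `none` denoting an unknown entry. -/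
def Pattern (α β F : Type*) := α → β → Option F

/-- A matrix `M` completes a pattern `A` if it agrees with all determined entries. -/
def Completes {α β F : Type*} (M : Matrix α β F) (A : Pattern α β F) : Prop :=
  ∀ i j c, A i j = some c → M i j = c

/-- The minrank of a pattern: the minimum rank over all its completions. -/
noncomputable def minrank {α β F : Type*} [Fintype α] [Fintype β] [Field F]
    (A : Pattern α β F) : ℕ :=
  sInf {r | ∃ M : Matrix α β F, Completes M A ∧ M.rank = r}

/-- The minrank is attained by some completion. -/
lemma minrank_exists {α β F : Type*} [Fintype α] [Fintype β] [Field F] (A : Pattern α β F) :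
    ∃ M : Matrix α β F, Completes M A ∧ M.rank = minrank A := by
  have hne : {r | ∃ M : Matrix α β F, Completes M A ∧ M.rank = r}.Nonempty := by
    refine ⟨_, (fun i j => (A i j).getD 0 : Matrix α β F), ?_, rfl⟩
    intro i j c hc
    simp [Matrix.of_apply, hc]
  exact Nat.sInf_mem hne

lemma minrank_le {α β F : Type*} [Fintype α] [Fintype β] [Field F] {A : Pattern α β F}
    {M : Matrix α β F} (hM : Completes M A) : minrank A ≤ M.rank :=
  Nat.sInf_le ⟨M, hM, rfl⟩

lemma matrix_rank_add_le {F α β : Type*} [Field F] [Fintype α] [Fintype β]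
    (M N : Matrix α β F) : (M + N).rank ≤ M.rank + N.rank := by
  classical
  rw [Matrix.rank, Matrix.rank, Matrix.rank, Matrix.mulVecLin_add]
  refine le_trans (Submodule.finrank_mono ?_)
    (Submodule.finrank_add_le_finrank_add_finrank _ _)
  rintro x ⟨v, rfl⟩
  exact Submodule.mem_sup.2 ⟨_, ⟨v, rfl⟩, _, ⟨v, rfl⟩, rfl⟩

lemma matrix_rank_finset_sum_le {F α β ι : Type*} [Field F] [Fintype α] [Fintype β]
    (s : Finset ι) (f : ι → Matrix α β F) :
    (∑ i ∈ s, f i).rank ≤ ∑ i ∈ s, (f i).rank := by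
  classical
  induction s using Finset.induction with
  | empty => simp
  | insert _ _ hx ih =>
    rw [Finset.sum_insert hx, Finset.sum_insert hx]
    exact (matrix_rank_add_le _ _).trans (Nat.add_le_add_left ih _)

/-- If the base pattern `A` is upper-triangulable with unit diagonal, then the minrank of
the block-extended pattern `E` (blocks `B j` at the `some 1` entries of column `j`, zero
blocks at `some 0` entries, unknown blocks at unknown entries) equals the sum of the
minranks of the component patterns. -/
theorem minrank_extension_upperTriangulable {F : Type*} [Field F] (k : ℕ)
    (A : Pattern (Fin k) (Fin k) F)
    (hA01 : ∀ i j c, A i j = some c → c = 0 ∨ c = 1)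
    (n m h : Fin k → ℕ)
    (B : (j : Fin k) → Pattern (Fin (n j)) (Fin (m j)) F)
    (σ τ : Equiv.Perm (Fin k))
    (hdiag : ∀ i : Fin k, A (σ i) (τ i) = some 1)
    (hlow : ∀ i j : Fin k, j < i → A (σ i) (τ j) = some 0)
    (heq : ∀ i j, A i j = some 1 → h i = n j)
    (E : Pattern ((i : Fin k) × Fin (h i)) ((j : Fin k) × Fin (m j)) F)
    (hE1 : ∀ (i j : Fin k) (hij : A i j = some 1) (a : Fin (h i)) (b : Fin (m j)),
      E ⟨i, a⟩ ⟨j, b⟩ = B j (Fin.cast (heq i j hij) a) b)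
    (hE0 : ∀ (i j : Fin k), A i j = some 0 →
      ∀ (a : Fin (h i)) (b : Fin (m j)), E ⟨i, a⟩ ⟨j, b⟩ = some 0)
    (hEx : ∀ (i j : Fin k), A i j = none →
      ∀ (a : Fin (h i)) (b : Fin (m j)), E ⟨i, a⟩ ⟨j, b⟩ = none) :
    minrank E = ∑ j : Fin k, minrank (B j) := by
  classical
  -- chosen completions of the component patterns
  choose Mc hMcC hMcR using fun j => minrank_exists (B j)
  -- UPPER BOUND
  have hup : minrank E ≤ ∑ j : Fin k, minrank (B j) := by
    set G : ∀ j : Fin k, Matrix ((i : Fin k) × Fin (h i)) (Fin (n j)) F := fun j p a' =>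
      if hij : A p.1 j = some 1 then (if Fin.cast (heq p.1 j hij) p.2 = a' then (1 : F) else 0)
      else 0 with hG
    set K : ∀ j : Fin k, Matrix (Fin (m j)) ((j' : Fin k) × Fin (m j')) F := fun j b q =>
      if hq : q.1 = j then (if Fin.cast (congrArg m hq) q.2 = b then (1 : F) else 0)
      else 0 with hK
    set N : Matrix ((i : Fin k) × Fin (h i)) ((j : Fin k) × Fin (m j)) F :=
      ∑ j : Fin k, G j * Mc j * K j with hNdef
    have hGM : ∀ (j : Fin k) (i : Fin k) (a : Fin (h i)) (b : Fin (m j)),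
        (G j * Mc j) ⟨i, a⟩ b =
          if hij : A i j = some 1 then Mc j (Fin.cast (heq i j hij) a) b else 0 := by
      intro j i a b
      rw [Matrix.mul_apply]
      by_cases hij : A i j = some 1
      · rw [dif_pos hij]
        rw [Finset.sum_congr rfl (fun a' _ => ?_), Finset.sum_ite_eq
          Finset.univ (Fin.cast (heq i j hij) a) (fun a' => Mc j a' b)]
        · simp
        · show (if hij' : A i j = some 1 then
            (if Fin.cast (heq i j hij') a = a' then (1:F) else 0) else 0) * Mc j a' b = _
          rw [dif_pos hij, ite_mul, one_mul, zero_mul]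
      · rw [dif_neg hij]
        refine Finset.sum_eq_zero fun a' _ => ?_
        show (if hij' : A i j = some 1 then
          (if Fin.cast (heq i j hij') a = a' then (1:F) else 0) else 0) * Mc j a' b = 0
        rw [dif_neg hij, zero_mul]
    have hN : ∀ (i : Fin k) (a : Fin (h i)) (j : Fin k) (b : Fin (m j)),
        N ⟨i, a⟩ ⟨j, b⟩ =
          if hij : A i j = some 1 then Mc j (Fin.cast (heq i j hij) a) b else 0 := by
      intro i a j b
      have hterm : ∀ j' : Fin k, (G j' * Mc j' * K j') ⟨i, a⟩ ⟨j, b⟩ =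
          if j' = j then
            (if hij : A i j = some 1 then Mc j (Fin.cast (heq i j hij) a) b else 0)
          else 0 := by
        intro j'
        rw [Matrix.mul_apply]
        by_cases hjj : j' = j
        · subst hjj
          rw [if_pos rfl]
          rw [Finset.sum_congr rfl (fun b' _ => ?_), Finset.sum_ite_eq Finset.univ b
            (fun b' => (G j' * Mc j') ⟨i, a⟩ b')]
          · rw [if_pos (Finset.mem_univ b), hGM]
          · show (G j' * Mc j') ⟨i, a⟩ b' *
              (if hq : j' = j' then (if Fin.cast (congrArg m hq) b = b' then (1:F) else 0)
               else 0) = _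
            rw [dif_pos rfl]
            have : Fin.cast (congrArg m (rfl : j' = j')) b = b := rfl
            rw [this, mul_ite, mul_one, mul_zero]
        · rw [if_neg hjj]
          refine Finset.sum_eq_zero fun b' _ => ?_
          show (G j' * Mc j') ⟨i, a⟩ b' *
            (if hq : j = j' then (if Fin.cast (congrArg m hq) b = b' then (1:F) else 0)
             else 0) = 0
          rw [dif_neg (fun hh => hjj hh.symm), mul_zero]
      rw [hNdef, Matrix.sum_apply, Finset.sum_congr rfl (fun j' _ => hterm j'),
        Finset.sum_ite_eq' Finset.univ j
          (fun _ => if hij : A i j = some 1 then Mc j (Fin.cast (heq i j hij) a) b else 0),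
        if_pos (Finset.mem_univ j)]
    have hcomp : Completes N E := by
      rintro ⟨i, a⟩ ⟨j, b⟩ c hc
      rcases hA : A i j with _ | c'
      · rw [hEx i j hA a b] at hc; exact absurd hc (by simp)
      · rcases hA01 i j c' hA with rfl | rfl
        · rw [hE0 i j hA a b] at hc
          have hc0 : c = 0 := by injection hc.symm
          have : ¬ A i j = some 1 := by
            rw [hA]; intro hcontra
            have : (0 : F) = 1 := by injection hcontra
            exact zero_ne_one this
          rw [hN, dif_neg this, hc0]
        · rw [hE1 i j hA a b] at hc
          rw [hN, dif_pos hA]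
          exact hMcC j _ b c hc
    have hrank : N.rank ≤ ∑ j : Fin k, minrank (B j) := by
      refine (matrix_rank_finset_sum_le _ _).trans (Finset.sum_le_sum fun j _ => ?_)
      calc (G j * Mc j * K j).rank ≤ (G j * Mc j).rank := Matrix.rank_mul_le_left _ _
        _ ≤ (Mc j).rank := Matrix.rank_mul_le_right _ _
        _ = minrank (B j) := hMcR j
    exact le_trans (minrank_le hcomp) hrank
  -- LOWER BOUND
  have hlo : ∑ j : Fin k, minrank (B j) ≤ minrank E := by
    obtain ⟨M, hMC, hMR⟩ := minrank_exists E
    rw [← hMR]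
    -- the diagonal blocks
    have ecast : ∀ i : Fin k, n (τ i) = h (σ i) := fun i => (heq (σ i) (τ i) (hdiag i)).symm
    set D : ∀ i : Fin k, Matrix (Fin (n (τ i))) (Fin (m (τ i))) F := fun i a b =>
      M ⟨σ i, Fin.cast (ecast i) a⟩ ⟨τ i, b⟩ with hD
    have hDcomp : ∀ i : Fin k, Completes (D i) (B (τ i)) := by
      intro i a b c hc
      have h1 := hE1 (σ i) (τ i) (hdiag i) (Fin.cast (ecast i) a) b
      have hcast : Fin.cast (heq (σ i) (τ i) (hdiag i)) (Fin.cast (ecast i) a) = a := by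
        apply Fin.ext; simp
      rw [hcast, hc] at h1
      exact hMC _ _ c h1
    -- choose independent generating subsets of the row spaces of the diagonal blocks
    have hT : ∀ i : Fin k, ∃ t : Set (Fin (m (τ i)) → F), t ⊆ Set.range (D i) ∧
        Submodule.span F t = Submodule.span F (Set.range (D i)) ∧
        LinearIndependent F ((↑) : t → (Fin (m (τ i)) → F)) := fun i =>
      exists_linearIndependent F (Set.range (D i))
    choose t hts htspan htind using hT
    haveI fti : ∀ i : Fin k, Fintype (t i) := fun i =>
      ((Set.finite_range (D i)).subset (hts i)).fintype
    have hcard : ∀ i : Fin k, (t i).toFinset.card = (D i).rank := by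
      intro i
      rw [Matrix.rank_eq_finrank_span_row, Matrix.row, ← htspan i, finrank_span_set_eq_card (htind i)]
    -- pick a row index realizing each chosen vector
    have hidx0 : ∀ i (v : t i), ∃ a : Fin (n (τ i)), D i a = v := fun i v => hts i v.2
    choose idx hidx using hidx0
    -- the selected rows of the big matrix
    set rows : ((i : Fin k) × t i) → ((j : Fin k) × Fin (m j)) → F := fun x =>
      M ⟨σ x.1, Fin.cast (ecast x.1) (idx x.1 x.2)⟩ with hrows
    have hzero : ∀ i i' : Fin k, i < i' → ∀ (a : Fin (h (σ i'))) (b : Fin (m (τ i))),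
        M ⟨σ i', a⟩ ⟨τ i, b⟩ = 0 := by
      intro i i' hii a b
      exact hMC _ _ 0 (hE0 (σ i') (τ i) (hlow i' i hii) a b)
    have hind : LinearIndependent F rows := by
      rw [Fintype.linearIndependent_iff]
      intro g hg
      have key : ∀ Nb : ℕ, ∀ i : Fin k, i.val < Nb → ∀ v : t i, g ⟨i, v⟩ = 0 := by
        intro Nb
        induction Nb with
        | zero => intro i hi; exact absurd hi (Nat.not_lt_zero _)
        | succ Nb IH =>
          intro i hi v
          -- evaluate the relation at the columns of block τ i
          have hcol : ∀ b : Fin (m (τ i)),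
              ∑ v' : t i, g ⟨i, v'⟩ * (v' : Fin (m (τ i)) → F) b = 0 := by
            intro b
            have h0 := congrFun hg ⟨τ i, b⟩
            rw [Finset.sum_apply] at h0
            simp only [Pi.smul_apply, smul_eq_mul, Pi.zero_apply] at h0
            rw [← Finset.univ_sigma_univ, Finset.sum_sigma] at h0
            rw [show (0:F) = ∑ i' : Fin k, ∑ v' : t i', g ⟨i', v'⟩ * rows ⟨i', v'⟩ ⟨τ i, b⟩
                from h0.symm]
            rw [Finset.sum_eq_single_of_mem i (Finset.mem_univ i)]
            · refine Finset.sum_congr rfl fun v' _ => ?_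
              have : rows ⟨i, v'⟩ ⟨τ i, b⟩ = (v' : Fin (m (τ i)) → F) b := by
                rw [hrows]
                have := congrFun (hidx i v') b
                exact this
              rw [this]
            · intro i' _ hne
              rcases lt_or_gt_of_ne hne with hlt | hgt
              · -- i' < i : coefficients vanish by the induction hypothesis
                refine Finset.sum_eq_zero fun v' _ => ?_
                have hi'v : g ⟨i', v'⟩ = 0 :=
                  IH i' (lt_of_lt_of_le hlt (Nat.lt_succ_iff.mp hi)) v'
                rw [hi'v, zero_mul]
              · -- i < i' : the block is below the diagonal, hence zero
                refine Finset.sum_eq_zero fun v' _ => ?_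
                have : rows ⟨i', v'⟩ ⟨τ i, b⟩ = 0 := by
                  rw [hrows]
                  exact hzero i i' hgt _ b
                rw [this, mul_zero]
          -- conclude by linear independence of t i
          have hsum : ∑ v' : t i, g ⟨i, v'⟩ • (v' : Fin (m (τ i)) → F) = 0 := by
            funext b
            rw [Finset.sum_apply]
            simpa using hcol b
          exact Fintype.linearIndependent_iff.mp (htind i) (fun v' => g ⟨i, v'⟩) hsum v
      intro x
      exact key k x.1 x.1.isLt x.2
    -- count
    have hcardsum : ∑ i : Fin k, (D i).rank = Fintype.card ((i : Fin k) × t i) := by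
      rw [Fintype.card_sigma]
      exact Finset.sum_congr rfl fun i _ => by rw [← hcard i, Set.toFinset_card]
    have hrange : Set.range rows ⊆ Set.range M := by
      rintro x ⟨y, rfl⟩
      exact ⟨_, rfl⟩
    have hle : Fintype.card ((i : Fin k) × t i) ≤ M.rank := by
      rw [Matrix.rank_eq_finrank_span_row, ← finrank_span_eq_card hind]
      exact Submodule.finrank_mono (Submodule.span_mono hrange)
    calc ∑ j : Fin k, minrank (B j) = ∑ i : Fin k, minrank (B (τ i)) :=
          (Equiv.sum_comp τ (fun j => minrank (B j))).symm
      _ ≤ ∑ i : Fin k, (D i).rank := Finset.sum_le_sum fun i _ => minrank_le (hDcomp i)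
      _ = Fintype.card ((i : Fin k) × t i) := hcardsum
      _ ≤ M.rank := hle
  exact le_antisymm hup hlo
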